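/- Let r_1, …, r_n ∈ ℝ_{>0} be multiplicatively independent (they generate a free abelian group of rank n under multiplication), and let p be a prime. Then the subgroup of ℝ_{>0} generated by all p^k-th roots r_i^{1/p^k} (i = 1,…,n, k ≥ 0) is a free ℤ[1/p]-module of rank n. -/

import Mathlib

open Real

/-- If `r₁, …, rₙ > 0` are multiplicatively independent reals and `p` is a prime,
then the subgroup of `ℝ_{>0}` generated by all `pᵏ`-th roots `rᵢ^(1/pᵏ)` is a free
`ℤ[1/p]`-module of rank `n`, i.e. isomorphic as an abelian group to `(ℤ[1/p])ⁿ`. -/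
theorem stmt6 (n p : ℕ) (hp : p.Prime) (r : Fin n → ℝ) (hr : ∀ i, 0 < r i)
    (hindep : ∀ m : Fin n → ℤ, (∏ i, r i ^ m i) = 1 → m = 0) :
    Nonempty
      (Additive (Subgroup.closure
          {u : ℝˣ | 0 < (u : ℝ) ∧
            ∃ (i : Fin n) (k : ℕ), (u : ℝ) = (r i) ^ (((p : ℝ) ^ k)⁻¹ : ℝ)}) ≃+
        (Fin n → Localization.Away (p : ℤ))) := by
  have hp0 : (0:ℝ) < p := by exact_mod_cast hp.pos
  have hpne : ((p:ℤ):ℝ) ≠ 0 := by exact_mod_cast hp0.ne'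
  set S : Set ℝˣ := {u : ℝˣ | 0 < (u : ℝ) ∧
      ∃ (i : Fin n) (k : ℕ), (u : ℝ) = (r i) ^ (((p : ℝ) ^ k)⁻¹ : ℝ)} with hS
  set H := Subgroup.closure S with hH
  -- the ring hom from the localization to ℝ
  set f : Localization.Away (p : ℤ) →+* ℝ :=
    Localization.awayLift (Int.castRingHom ℝ) (p : ℤ) (isUnit_iff_ne_zero.mpr hpne) with hf
  have falg : ∀ a : ℤ, f (algebraMap ℤ (Localization.Away (p:ℤ)) a) = a := by
    intro a
    simpa [hf, Localization.awayLift] using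
      IsLocalization.Away.AwayMap.lift_eq (p:ℤ) (isUnit_iff_ne_zero.mpr hpne) a
  -- representation of elements of the localization
  have frep : ∀ x : Localization.Away (p:ℤ), ∃ (k : ℕ) (a : ℤ),
      x * algebraMap ℤ (Localization.Away (p:ℤ)) ((p:ℤ)^k) =
        algebraMap ℤ (Localization.Away (p:ℤ)) a ∧ f x * (p:ℝ)^k = a := by
    intro x
    obtain ⟨⟨a, s⟩, hxs⟩ := IsLocalization.surj (Submonoid.powers (p:ℤ)) x
    obtain ⟨k, hk⟩ := s.2
    have hk' : (p:ℤ)^k = (s:ℤ) := hk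
    have h2 : x * algebraMap ℤ (Localization.Away (p:ℤ)) ((p:ℤ)^k) =
        algebraMap ℤ (Localization.Away (p:ℤ)) a := by rw [hk']; exact hxs
    refine ⟨k, a, h2, ?_⟩
    have := congrArg f h2
    rw [map_mul, falg, falg] at this
    simpa using this
  have finj : Function.Injective f := by
    rw [injective_iff_map_eq_zero]
    intro x hx
    obtain ⟨k, a, hxa, hfa⟩ := frep x
    rw [hx, zero_mul] at hfa
    have ha : a = 0 := by exact_mod_cast hfa.symm
    rw [ha, map_zero] at hxa
    have hu := IsLocalization.map_units (Localization.Away (p:ℤ))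
      (⟨(p:ℤ)^k, k, rfl⟩ : Submonoid.powers (p:ℤ))
    exact (hu.mul_left_eq_zero).mp hxa
  -- positivity on H
  have hpos : ∀ u : ℝˣ, u ∈ H → 0 < (u : ℝ) := by
    intro u hu
    induction hu using Subgroup.closure_induction with
    | mem x hx => exact hx.1
    | one => norm_num
    | mul x y _ _ hx hy => exact mul_pos hx hy
    | inv x _ hx => rw [Units.val_inv_eq_inv_val]; exact inv_pos.mpr hx
  -- the log homomorphism on H
  set φ : Additive ↥H →+ ℝ := AddMonoidHom.mk'
      (fun u => Real.log (((Additive.toMul u : ↥H) : ℝˣ) : ℝ))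
      (fun a b => by
        simp only [toMul_add, Subgroup.coe_mul, Units.val_mul]
        exact Real.log_mul (Units.ne_zero _) (Units.ne_zero _)) with hφ
  have φinj : Function.Injective φ := by
    intro a b hab
    have ha := hpos _ (Additive.toMul a : ↥H).2
    have hb := hpos _ (Additive.toMul b : ↥H).2
    have : (((Additive.toMul a : ↥H) : ℝˣ) : ℝ) = (((Additive.toMul b : ↥H) : ℝˣ) : ℝ) := by
      rw [← Real.exp_log ha, ← Real.exp_log hb]
      exact congrArg Real.exp hab
    exact Additive.toMul.injective (Subtype.ext (Units.ext this))
  -- the sum homomorphism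
  set ψ : (Fin n → Localization.Away (p:ℤ)) →+ ℝ := AddMonoidHom.mk'
      (fun m => ∑ i, f (m i) * Real.log (r i))
      (fun a b => by
        simp only [Pi.add_apply, map_add, add_mul]
        exact Finset.sum_add_distrib) with hψ
  have ψapp : ∀ m, ψ m = ∑ i, f (m i) * Real.log (r i) := fun _ => rfl
  have ψinj : Function.Injective ψ := by
    rw [injective_iff_map_eq_zero]
    intro m hm
    rw [ψapp] at hm
    choose k a hka hfa using fun i => frep (m i)
    set K := Finset.univ.sup k with hK
    set b : Fin n → ℤ := fun i => a i * (p:ℤ)^(K - k i) with hb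
    have hfb : ∀ i, f (m i) * (p:ℝ)^K = (b i : ℝ) := by
      intro i
      have hle : k i ≤ K := Finset.le_sup (Finset.mem_univ i)
      have : (p:ℝ)^K = (p:ℝ)^(k i) * (p:ℝ)^(K - k i) := by
        rw [← pow_add, Nat.add_sub_cancel' hle]
      rw [this, ← mul_assoc, hfa i, hb]
      push_cast
      ring
    have hb0 : ∀ i, (b i : ℝ) * Real.log (r i) = (p:ℝ)^K * (f (m i) * Real.log (r i)) := by
      intro i; rw [← hfb i]; ring
    have hsum : ∑ i, (b i : ℝ) * Real.log (r i) = 0 := by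
      simp only [hb0, ← Finset.mul_sum, hm, mul_zero]
    have hprod : (∏ i, r i ^ b i) = 1 := by
      have hppos : (0:ℝ) < ∏ i, r i ^ b i :=
        Finset.prod_pos fun i _ => zpow_pos (hr i) _
      have hlog : Real.log (∏ i, r i ^ b i) = 0 := by
        rw [Real.log_prod fun i _ => (zpow_pos (hr i) _).ne']
        simpa [Real.log_zpow] using hsum
      rw [← Real.exp_log hppos, hlog, Real.exp_zero]
    have hbz := hindep b hprod
    funext i
    have : f (m i) = 0 := by
      have := hfb i
      rw [hbz] at this
      simp only [Pi.zero_apply, Int.cast_zero] at this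
      have hpK : (p:ℝ)^K ≠ 0 := pow_ne_zero _ hp0.ne'
      exact (mul_eq_zero.mp this).resolve_right hpK
    exact finj (by simp [this])
  -- range equality
  have hrange : φ.range = ψ.range := by
    apply le_antisymm
    · rintro _ ⟨u, rfl⟩
      have key : ∀ w : ℝˣ, w ∈ H → Real.log (w : ℝ) ∈ ψ.range := by
        intro w hw
        induction hw using Subgroup.closure_induction with
        | mem x hx =>
          obtain ⟨hxpos, i, k, hxk⟩ := hx
          refine ⟨Pi.single i (IsLocalization.mk' (Localization.Away (p:ℤ)) 1
            (⟨(p:ℤ)^k, k, rfl⟩ : Submonoid.powers (p:ℤ))), ?_⟩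
          have hfmk : f (IsLocalization.mk' (Localization.Away (p:ℤ)) 1
              (⟨(p:ℤ)^k, k, rfl⟩ : Submonoid.powers (p:ℤ))) = ((p:ℝ)^k)⁻¹ := by
            have hmul : IsLocalization.mk' (Localization.Away (p:ℤ)) 1
                (⟨(p:ℤ)^k, k, rfl⟩ : Submonoid.powers (p:ℤ)) *
                algebraMap ℤ (Localization.Away (p:ℤ)) ((p:ℤ)^k) =
                algebraMap ℤ (Localization.Away (p:ℤ)) 1 := by
              rw [IsLocalization.mk'_spec]
            have := congrArg f hmul
            rw [map_mul, falg, falg] at this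
            push_cast at this
            field_simp at this ⊢
            linarith [this]
          rw [ψapp]
          rw [Fintype.sum_eq_single i (fun j hj => by
            rw [Pi.single_eq_of_ne hj, map_zero, zero_mul])]
          rw [Pi.single_eq_same, hfmk, hxk, Real.log_rpow (hr i)]
        | one => simpa using (zero_mem ψ.range)
        | mul x y _ _ hx hy =>
          rw [Units.val_mul, Real.log_mul (Units.ne_zero _) (Units.ne_zero _)]
          exact add_mem hx hy
        | inv x _ hx =>
          rw [Units.val_inv_eq_inv_val, Real.log_inv]
          exact neg_mem hx
      exact key _ (Additive.toMul u : ↥H).2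
    · rintro _ ⟨m, rfl⟩
      rw [ψapp]
      apply AddSubgroup.sum_mem
      intro i _
      obtain ⟨k, a, hka, hfa⟩ := frep (m i)
      have hgpos : (0:ℝ) < r i ^ (((p:ℝ)^k)⁻¹ : ℝ) := Real.rpow_pos_of_pos (hr i) _
      set g : ℝˣ := Units.mk0 _ hgpos.ne' with hg
      have hgS : g ∈ S := ⟨hgpos, i, k, rfl⟩
      have hgH : g ∈ H := Subgroup.subset_closure hgS
      have huH : g ^ a ∈ H := zpow_mem hgH a
      refine ⟨Additive.ofMul (⟨g ^ a, huH⟩ : ↥H), ?_⟩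
      show Real.log (((g ^ a : ℝˣ)) : ℝ) = f (m i) * Real.log (r i)
      rw [Units.val_zpow_eq_zpow_val, Real.log_zpow]
      have hlogg : Real.log (g : ℝ) = ((p:ℝ)^k)⁻¹ * Real.log (r i) :=
        Real.log_rpow (hr i) _
      rw [hlogg, ← hfa]
      have hpK : (p:ℝ)^k ≠ 0 := pow_ne_zero _ hp0.ne'
      field_simp
  exact ⟨(AddMonoidHom.ofInjective φinj).trans
    ((AddEquiv.addSubgroupCongr hrange).trans (AddMonoidHom.ofInjective ψinj).symm)⟩
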